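/- Let (X_n)_{n ≥ 1} be independent Poisson random variables with parameters μ_n ≥ 0, and suppose ∑_n 2^{-n} μ_n = ∞. Then almost surely ∑_n 2^{-n} X_n = ∞. -/

import Mathlib

open MeasureTheory ProbabilityTheory Real
open scoped NNReal ENNReal

lemma poisson_chernoff {Ω : Type*} [MeasurableSpace Ω] (P : Measure Ω)
    (X : Ω → ℕ) (hX : Measurable X) (μ : ℝ≥0)
    (hd : Measure.map X P = poissonMeasure μ) :
    P {ω | (X ω : ℝ) ≤ μ / 2} ≤
      ENNReal.ofReal (Real.exp ((μ : ℝ) * Real.exp (-1) - μ + μ / 2)) := by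
  set a : ℝ := (μ : ℝ) * Real.exp (-1) with ha
  set f : Ω → ℝ≥0∞ := fun ω => ENNReal.ofReal (Real.exp (-(X ω : ℝ))) with hf
  have hfm : Measurable f :=
    (measurable_from_top (f := fun n : ℕ => ENNReal.ofReal (Real.exp (-(n : ℝ))))).comp hX
  -- Markov inequality
  have markov := mul_meas_ge_le_lintegral₀ (μ := P) hfm.aemeasurable
    (ENNReal.ofReal (Real.exp (-(μ / 2 : ℝ))))
  have hsub : P {ω | (X ω : ℝ) ≤ μ / 2} ≤
      P {ω | ENNReal.ofReal (Real.exp (-(μ / 2 : ℝ))) ≤ f ω} := by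
    apply measure_mono
    intro ω hω
    simp only [Set.mem_setOf_eq] at hω ⊢
    exact ENNReal.ofReal_le_ofReal (Real.exp_le_exp.2 (by linarith))
  -- compute the Laplace transform
  have hlin : ∫⁻ ω, f ω ∂P = ENNReal.ofReal (Real.exp (a - μ)) := by
    have h1 : ∫⁻ ω, f ω ∂P
        = ∫⁻ n, ENNReal.ofReal (Real.exp (-(n : ℝ))) ∂(Measure.map X P) := by
      rw [hf]
      exact (lintegral_map (f := fun n : ℕ => ENNReal.ofReal (Real.exp (-(n : ℝ))))
        measurable_from_top hX).symm
    rw [h1, hd, lintegral_countable']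
    have hsing : ∀ n : ℕ, poissonMeasure μ {n} = ENNReal.ofReal (poissonPMFReal μ n) := by
      intro n
      rw [poissonMeasure_singleton]
      rfl
    have hterm : ∀ n : ℕ, ENNReal.ofReal (Real.exp (-(n : ℝ))) * poissonMeasure μ {n}
        = ENNReal.ofReal (Real.exp (-(μ : ℝ)) * (a ^ n / n.factorial)) := by
      intro n
      rw [hsing n, ← ENNReal.ofReal_mul (Real.exp_nonneg _)]
      congr 1
      have hexp : Real.exp (-(n : ℝ)) = (Real.exp (-1)) ^ n := by
        rw [← Real.exp_nat_mul]; ring_nf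
      rw [poissonPMFReal, hexp, ha, mul_pow]
      ring
    have hs : HasSum (fun n : ℕ => Real.exp (-(μ : ℝ)) * (a ^ n / n.factorial))
        (Real.exp (-(μ : ℝ)) * Real.exp a) := by
      have h0 : HasSum (fun n : ℕ => a ^ n / n.factorial) (Real.exp a) := by
        rw [Real.exp_eq_exp_ℝ]
        exact NormedSpace.expSeries_div_hasSum_exp a
      exact h0.mul_left _
    calc ∑' n : ℕ, ENNReal.ofReal (Real.exp (-(n : ℝ))) * poissonMeasure μ {n}
        = ∑' n : ℕ, ENNReal.ofReal (Real.exp (-(μ : ℝ)) * (a ^ n / n.factorial)) := by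
          exact tsum_congr hterm
      _ = ENNReal.ofReal (∑' n : ℕ, Real.exp (-(μ : ℝ)) * (a ^ n / n.factorial)) := by
          refine (ENNReal.ofReal_tsum_of_nonneg (fun n => ?_) hs.summable).symm
          have h0 : (0:ℝ) ≤ a := mul_nonneg μ.coe_nonneg (Real.exp_nonneg _)
          positivity
      _ = ENNReal.ofReal (Real.exp (a - μ)) := by
          rw [hs.tsum_eq, ← Real.exp_add]
          ring_nf
  have hmain : ENNReal.ofReal (Real.exp (-(μ / 2 : ℝ))) * P {ω | (X ω : ℝ) ≤ μ / 2}
      ≤ ENNReal.ofReal (Real.exp (a - μ)) := by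
    calc ENNReal.ofReal (Real.exp (-(μ / 2 : ℝ))) * P {ω | (X ω : ℝ) ≤ μ / 2}
        ≤ ENNReal.ofReal (Real.exp (-(μ / 2 : ℝ)))
            * P {ω | ENNReal.ofReal (Real.exp (-(μ / 2 : ℝ))) ≤ f ω} :=
          mul_le_mul_right hsub _
      _ ≤ ∫⁻ ω, f ω ∂P := markov
      _ = _ := hlin
  have hεpos : ENNReal.ofReal (Real.exp (-(μ / 2 : ℝ))) ≠ 0 := by
    simp [ENNReal.ofReal_eq_zero, not_le, Real.exp_pos]
  have hdiv : P {ω | (X ω : ℝ) ≤ μ / 2}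
      ≤ ENNReal.ofReal (Real.exp (a - μ)) / ENNReal.ofReal (Real.exp (-(μ / 2 : ℝ))) := by
    rw [ENNReal.le_div_iff_mul_le (Or.inl hεpos) (Or.inr ENNReal.ofReal_ne_top)]
    rw [mul_comm]; exact hmain
  calc P {ω | (X ω : ℝ) ≤ μ / 2}
      ≤ ENNReal.ofReal (Real.exp (a - μ)) / ENNReal.ofReal (Real.exp (-(μ / 2 : ℝ))) := hdiv
    _ = ENNReal.ofReal (Real.exp (a - μ) / Real.exp (-(μ / 2 : ℝ))) :=
        (ENNReal.ofReal_div_of_pos (Real.exp_pos _)).symm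
    _ = ENNReal.ofReal (Real.exp (a - μ + μ / 2)) := by
        rw [← Real.exp_sub]; ring_nf

theorem poisson_weighted_sum_infinite_as
    {Ω : Type*} [MeasurableSpace Ω] (P : Measure Ω) [IsProbabilityMeasure P]
    (X : ℕ → Ω → ℕ) (hXmeas : ∀ n, Measurable (X n))
    (hindep : iIndepFun X P)
    (μ : ℕ → ℝ≥0)
    (hdist : ∀ n, Measure.map (X n) P = poissonMeasure (μ n))
    (hsum : ¬ Summable (fun n : ℕ => (2 : ℝ) ^ (-(n : ℝ)) * (μ n : ℝ))) :
    ∀ᵐ ω ∂P, ¬ Summable (fun n : ℕ => (2 : ℝ) ^ (-(n : ℝ)) * (X n ω : ℝ)) := by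
  classical
  set c : ℝ := 1 / 2 - Real.exp (-1) with hc
  have hcpos : 0 < c := by
    have h1 : Real.exp (-1) = (Real.exp 1)⁻¹ := by rw [Real.exp_neg]
    have h2 : (2 : ℝ) < Real.exp 1 := by
      have := Real.exp_one_gt_d9; linarith
    have : (Real.exp 1)⁻¹ < 1 / 2 := by
      rw [inv_eq_one_div, div_lt_div_iff₀ (Real.exp_pos 1) (by norm_num)]
      linarith
    rw [hc, h1]; linarith
  -- the "large parameter" set
  set S : ℕ → Prop := fun n => (2 : ℝ) ^ n / ((n : ℝ) + 1) ^ 2 < μ n with hS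
  set s : ℕ → Set Ω := fun n => {ω | S n ∧ (X n ω : ℝ) ≤ μ n / 2} with hs
  -- the summable bound
  set b : ℕ → ℝ := fun n => c⁻¹ * (((n : ℝ) + 1) ^ 2 * (1 / 2 : ℝ) ^ n) with hb
  have hbnonneg : ∀ n, 0 ≤ b n := by
    intro n; rw [hb]; positivity
  have hbsummable : Summable b := by
    have h1 : Summable (fun n : ℕ => (n : ℝ) ^ 2 * (1 / 2 : ℝ) ^ n) :=
      summable_pow_mul_geometric_of_norm_lt_one 2 (by norm_num)
    have h2 : Summable (fun n : ℕ => (n : ℝ) ^ 1 * (1 / 2 : ℝ) ^ n) :=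
      summable_pow_mul_geometric_of_norm_lt_one 1 (by norm_num)
    have h3 : Summable (fun n : ℕ => (1 / 2 : ℝ) ^ n) :=
      summable_geometric_of_lt_one (by norm_num) (by norm_num)
    have h4 : Summable (fun n : ℕ => (n : ℝ) ^ 2 * (1 / 2 : ℝ) ^ n
        + (2 * ((n : ℝ) ^ 1 * (1 / 2 : ℝ) ^ n) + (1 / 2 : ℝ) ^ n)) :=
      h1.add ((h2.mul_left 2).add h3)
    have h5 := h4.mul_left c⁻¹
    refine h5.congr fun n => ?_
    rw [hb]; ring
  -- bound on measures of the bad events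
  have hmeas_bound : ∀ n, P (s n) ≤ ENNReal.ofReal (b n) := by
    intro n
    by_cases hSn : S n
    · have hsub : s n ⊆ {ω | (X n ω : ℝ) ≤ μ n / 2} := fun ω hω => hω.2
      have := (measure_mono hsub).trans (poisson_chernoff P (X n) (hXmeas n) (μ n) (hdist n))
      refine this.trans (ENNReal.ofReal_le_ofReal ?_)
      have hμpos : (0 : ℝ) < μ n := lt_of_le_of_lt (by positivity) hSn
      have hexparg : (μ n : ℝ) * Real.exp (-1) - μ n + μ n / 2 = -(c * μ n) := by
        rw [hc]; ring
      rw [hexparg]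
      have h1 : Real.exp (-(c * μ n)) ≤ (c * μ n)⁻¹ := by
        rw [Real.exp_neg]
        have h2 : c * μ n ≤ Real.exp (c * μ n) :=
          le_trans (by linarith [Real.add_one_le_exp (c * (μ n : ℝ))]) le_rfl
        exact inv_anti₀ (by positivity) (by linarith [Real.add_one_le_exp (c * (μ n : ℝ))])
      refine h1.trans ?_
      rw [mul_inv, hb]
      have hSn' : (2 : ℝ) ^ n / ((n : ℝ) + 1) ^ 2 < μ n := hSn
      have hinv : ((μ n : ℝ))⁻¹ ≤ ((n : ℝ) + 1) ^ 2 * (1 / 2 : ℝ) ^ n := by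
        have h7 : ((μ n : ℝ))⁻¹ ≤ ((2 : ℝ) ^ n / ((n : ℝ) + 1) ^ 2)⁻¹ :=
          inv_anti₀ (by positivity) hSn'.le
        refine h7.trans_eq ?_
        rw [inv_div, div_eq_mul_inv, one_div, inv_pow]
      exact mul_le_mul_of_nonneg_left hinv (by positivity)
    · have : s n = ∅ := by
        ext ω; simp [hs, hSn]
      rw [this]
      simp [hbnonneg n]
  -- Borel–Cantelli
  have htsum : (∑' n, P (s n)) ≠ ∞ := by
    have h1 : (∑' n, P (s n)) ≤ ∑' n, ENNReal.ofReal (b n) :=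
      ENNReal.tsum_le_tsum hmeas_bound
    have h2 : (∑' n, ENNReal.ofReal (b n)) = ENNReal.ofReal (∑' n, b n) :=
      (ENNReal.ofReal_tsum_of_nonneg hbnonneg hbsummable).symm
    rw [h2] at h1
    exact ne_top_of_le_ne_top ENNReal.ofReal_ne_top h1
  filter_upwards [ae_eventually_notMem htsum] with ω hω hsummable
  apply hsum
  obtain ⟨N, hN⟩ := Filter.eventually_atTop.1 hω
  -- comparison
  set g : ℕ → ℝ := fun n => 1 / ((n : ℝ) + 1) ^ 2 + 2 * ((2 : ℝ) ^ (-(n : ℝ)) * (X n ω : ℝ))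
  have hgsummable : Summable g := by
    have h1 : Summable (fun n : ℕ => 1 / ((n : ℝ) + 1) ^ 2) := by
      have := Real.summable_one_div_nat_pow.2 (le_refl 2)
      have h2 := (summable_nat_add_iff 1).2 this
      exact h2.congr fun n => by push_cast; ring_nf
    exact h1.add (hsummable.mul_left 2)
  have hcomp : ∀ n, (2 : ℝ) ^ (-((n + N : ℕ) : ℝ)) * (μ (n + N) : ℝ) ≤ g (n + N) := by
    intro n
    set m := n + N with hm
    have hpow : (2 : ℝ) ^ (-((m : ℕ) : ℝ)) = ((2 : ℝ) ^ (m : ℕ))⁻¹ := by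
      rw [← Real.rpow_natCast 2 m, ← Real.rpow_neg (by norm_num)]
    by_cases hSm : S m
    · have hnot : ¬ ((X m ω : ℝ) ≤ μ m / 2) := fun h => hN m (Nat.le_add_left N n) ⟨hSm, h⟩
      push_neg at hnot
      have : (2 : ℝ) ^ (-((m : ℕ) : ℝ)) * (μ m : ℝ)
          ≤ 2 * ((2 : ℝ) ^ (-((m : ℕ) : ℝ)) * (X m ω : ℝ)) := by
        have hp : (0:ℝ) < (2 : ℝ) ^ (-((m : ℕ) : ℝ)) := by positivity
        nlinarith
      refine this.trans ?_
      have : (0:ℝ) ≤ 1 / ((m : ℝ) + 1) ^ 2 := by positivity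
      simp only [g]; linarith
    · have hle : (μ m : ℝ) ≤ (2 : ℝ) ^ m / ((m : ℝ) + 1) ^ 2 := not_lt.1 hSm
      have : (2 : ℝ) ^ (-((m : ℕ) : ℝ)) * (μ m : ℝ) ≤ 1 / ((m : ℝ) + 1) ^ 2 := by
        rw [hpow]
        rw [inv_mul_le_iff₀ (by positivity)]
        calc (μ m : ℝ) ≤ (2 : ℝ) ^ m / ((m : ℝ) + 1) ^ 2 := hle
          _ = (2:ℝ) ^ m * (1 / ((m : ℝ) + 1) ^ 2) := by ring
      have h0 : (0:ℝ) ≤ 2 * ((2 : ℝ) ^ (-((m : ℕ) : ℝ)) * (X m ω : ℝ)) := by positivity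
      simp only [g]; linarith
  have hshift : Summable (fun n : ℕ => (2 : ℝ) ^ (-((n + N : ℕ) : ℝ)) * (μ (n + N) : ℝ)) := by
    refine Summable.of_nonneg_of_le (fun n => by positivity) hcomp ?_
    exact (summable_nat_add_iff N).2 hgsummable
  exact (summable_nat_add_iff N).1 hshift
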